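/- Let Φ ≻ 0, let F : ℝ^q ⇉ ℝ^q be such that Φ^{-1}F is maximally monotone in ⟨·,·⟩_Φ and (1/S)-inverse Lipschitz in ‖·‖_Φ (S > 0). Then the resolvent (Id + Φ^{-1}F)^{-1} is a contraction in ‖·‖_Φ with rate S/√(S²+1) < 1. -/

import Mathlib

noncomputable section
open Matrix

abbrev Evec (q : ℕ) := EuclideanSpace ℝ (Fin q)

/-- The `Φ`-weighted inner product `⟨u, v⟩_Φ = uᵀΦv`. -/
noncomputable def wip {q : ℕ} (Φ : Matrix (Fin q) (Fin q) ℝ) (u v : Evec q) : ℝ :=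
  inner ℝ (Matrix.toEuclideanLin Φ u) v

/-- The `Φ`-weighted norm `‖v‖_Φ = √(vᵀΦv)`. -/
noncomputable def wnorm {q : ℕ} (Φ : Matrix (Fin q) (Fin q) ℝ) (v : Evec q) : ℝ :=
  Real.sqrt (wip Φ v v)

section Aux

set_option linter.unusedSectionVars false

open Finset Metric RealInnerProductSpace


variable {E : Type*} [NormedAddCommGroup E] [InnerProductSpace ℝ E]

/-- polarization-type inequality used in the Kirszbraun computation -/
lemma kirsz_inner_ineq {u v u' v' : E} {m : ℝ}
    (hu : ‖u‖ ^ 2 = ‖u'‖ ^ 2 + m) (hv : ‖v‖ ^ 2 = ‖v'‖ ^ 2 + m)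
    (h : ‖u - v‖ ≤ ‖u' - v'‖) : ⟪u', v'⟫ + m ≤ ⟪u, v⟫ := by
  have h2 : ‖u - v‖ ^ 2 ≤ ‖u' - v'‖ ^ 2 := by
    have := norm_nonneg (u - v)
    nlinarith
  have e1 := @norm_sub_sq_real E _ _ u v
  have e2 := @norm_sub_sq_real E _ _ u' v'
  nlinarith

lemma kirsz_sum_ineq {κ : Type*} (F : Finset κ) (w : κ → ℝ) (f g : κ → E) (m : ℝ)
    (hw : ∀ y ∈ F, 0 ≤ w y) (hw1 : ∑ y ∈ F, w y = 1)
    (hfg : ∀ y ∈ F, ∀ y' ∈ F, ⟪g y, g y'⟫ + m ≤ ⟪f y, f y'⟫) :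
    ‖∑ y ∈ F, w y • g y‖ ^ 2 + m ≤ ‖∑ y ∈ F, w y • f y‖ ^ 2 := by
  have expand : ∀ h : κ → E, ‖∑ y ∈ F, w y • h y‖ ^ 2
      = ∑ y ∈ F, ∑ y' ∈ F, (w y * w y') * ⟪h y, h y'⟫ := by
    intro h
    rw [← real_inner_self_eq_norm_sq, sum_inner]
    refine Finset.sum_congr rfl fun y hy => ?_
    rw [real_inner_smul_left, inner_sum, Finset.mul_sum]
    refine Finset.sum_congr rfl fun y' hy' => ?_
    rw [real_inner_smul_right]; ring
  rw [expand, expand]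
  have hm : (∑ y ∈ F, ∑ y' ∈ F, (w y * w y') * m) = m := by
    simp [← Finset.sum_mul, hw1, ← Finset.mul_sum]
  have h1 : (∑ y ∈ F, ∑ y' ∈ F, ((w y * w y') * ⟪g y, g y'⟫ + (w y * w y') * m))
      ≤ ∑ y ∈ F, ∑ y' ∈ F, (w y * w y') * ⟪f y, f y'⟫ := by
    refine Finset.sum_le_sum fun y hy => Finset.sum_le_sum fun y' hy' => ?_
    rw [← mul_add]
    exact mul_le_mul_of_nonneg_left (hfg y hy y' hy')
      (mul_nonneg (hw y hy) (hw y' hy'))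
  have h2 : (∑ y ∈ F, ∑ y' ∈ F, ((w y * w y') * ⟪g y, g y'⟫ + (w y * w y') * m))
      = (∑ y ∈ F, ∑ y' ∈ F, (w y * w y') * ⟪g y, g y'⟫)
        + ∑ y ∈ F, ∑ y' ∈ F, (w y * w y') * m := by
    rw [← Finset.sum_add_distrib]
    exact Finset.sum_congr rfl fun y hy => by rw [← Finset.sum_add_distrib]
  rw [h2, hm] at h1
  exact h1

lemma continuous_finset_sup' {ι : Type*} {s : Finset ι} (hs : s.Nonempty) (f : ι → E → ℝ)
    (hf : ∀ i, Continuous (f i)) :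
    Continuous (fun z => s.sup' hs fun i => f i z) := by
  induction hs using Finset.Nonempty.cons_induction with
  | singleton i =>
      simp only [Finset.sup'_singleton]
      exact hf i
  | cons i s hi hs ih =>
      simp only [Finset.sup'_cons hs]
      exact Continuous.max (hf i) ih

variable [FiniteDimensional ℝ E]

/-- Finite one-point Kirszbraun: the balls `B(b i, ‖p - a i‖)` have a common point
when `b` is 1-Lipschitz w.r.t. `a`. -/
lemma kirsz_finite {ι : Type*} (s : Finset ι) (hs : s.Nonempty) (a b : ι → E)
    (hlip : ∀ i ∈ s, ∀ j ∈ s, ‖b i - b j‖ ≤ ‖a i - a j‖) (p : E) :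
    ∃ z : E, ∀ i ∈ s, ‖z - b i‖ ≤ ‖p - a i‖ := by
  classical
  set φ : E → ℝ := fun z => s.sup' hs fun i => ‖z - b i‖ ^ 2 - ‖p - a i‖ ^ 2 with hφ
  have contφ : Continuous φ := by
    refine continuous_finset_sup' hs _ fun i => ?_
    have : Continuous fun z : E => ‖z - b i‖ := (continuous_id.sub continuous_const).norm
    fun_prop
  -- global minimizer
  obtain ⟨i₀, hi₀⟩ := id hs
  set M : ℝ := φ (b i₀) with hM
  set R : ℝ := Real.sqrt (max 0 (M + ‖p - a i₀‖ ^ 2)) + 1 with hR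
  have hRpos : 0 < R := by positivity
  have hout : ∀ z : E, z ∉ closedBall (b i₀) R → M < φ z := by
    intro z hz
    rw [mem_closedBall, not_le, dist_eq_norm] at hz
    have h1 : ‖z - b i₀‖ ^ 2 - ‖p - a i₀‖ ^ 2 ≤ φ z := by
      simp only [hφ]
      exact Finset.le_sup' (fun i => ‖z - b i‖ ^ 2 - ‖p - a i‖ ^ 2) hi₀
    have h2 : max 0 (M + ‖p - a i₀‖ ^ 2) < R ^ 2 := by
      rw [hR]
      have h3 := Real.sq_sqrt (le_max_left 0 (M + ‖p - a i₀‖ ^ 2))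
      nlinarith [Real.sqrt_nonneg (max 0 (M + ‖p - a i₀‖ ^ 2))]
    have h4 : M + ‖p - a i₀‖ ^ 2 ≤ max 0 (M + ‖p - a i₀‖ ^ 2) := le_max_right _ _
    nlinarith [norm_nonneg (z - b i₀)]
  obtain ⟨z₀, hz₀K, hz₀min⟩ := (isCompact_closedBall (b i₀) R).exists_isMinOn
    (Metric.nonempty_closedBall.2 hRpos.le) contφ.continuousOn
  have hmin : ∀ z : E, φ z₀ ≤ φ z := by
    intro z
    by_cases hz : z ∈ closedBall (b i₀) R
    · exact hz₀min hz
    · have h0 : φ z₀ ≤ M := hz₀min (Metric.mem_closedBall_self hRpos.le)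
      exact h0.trans (hout z hz).le
  set m : ℝ := φ z₀ with hm
  -- if m ≤ 0 we are done
  rcases le_or_gt m 0 with hm0 | hm0
  · refine ⟨z₀, fun i hi => ?_⟩
    have h1 : ‖z₀ - b i‖ ^ 2 - ‖p - a i‖ ^ 2 ≤ m := by
      simp only [hm, hφ]
      exact Finset.le_sup' (fun i => ‖z₀ - b i‖ ^ 2 - ‖p - a i‖ ^ 2) hi
    have h2 : ‖z₀ - b i‖ ^ 2 ≤ ‖p - a i‖ ^ 2 := by linarith
    have := Real.sqrt_le_sqrt h2
    rwa [Real.sqrt_sq (norm_nonneg _), Real.sqrt_sq (norm_nonneg _)] at this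
  -- otherwise derive a contradiction
  exfalso
  set A : Finset ι := s.filter fun i => ‖z₀ - b i‖ ^ 2 - ‖p - a i‖ ^ 2 = m with hA
  have hAs : A ⊆ s := Finset.filter_subset _ _
  have hAne : A.Nonempty := by
    obtain ⟨i, hi, hieq⟩ := s.exists_mem_eq_sup' hs fun i => ‖z₀ - b i‖ ^ 2 - ‖p - a i‖ ^ 2
    exact ⟨i, Finset.mem_filter.2 ⟨hi, hieq.symm⟩⟩
  set F : Finset E := A.image b with hF
  -- z₀ lies in the convex hull of the active centers
  have hzF : z₀ ∈ convexHull ℝ (F : Set E) := by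
    by_contra hz
    obtain ⟨f, u, hfu, hux⟩ := _root_.geometric_hahn_banach_closed_point
      (convex_convexHull ℝ _) ((F : Set E).toFinite.isCompact_convexHull (𝕜 := ℝ)).isClosed hz
    set d : E := (InnerProductSpace.toDual ℝ E).symm f with hd
    have hdf : ∀ y : E, ⟪d, y⟫ = f y := fun y => InnerProductSpace.toDual_symm_apply
    have hact : ∀ i ∈ A, 0 < ⟪d, z₀ - b i⟫ := by
      intro i hi
      have h1 : f (b i) < u := hfu (b i) (subset_convexHull ℝ _ (by
        exact_mod_cast Finset.mem_image_of_mem b hi))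
      rw [inner_sub_right, hdf, hdf]
      linarith
    -- eventually moving along -d decreases φ below m
    have hev : ∀ i ∈ s, ∀ᶠ t in nhdsWithin (0:ℝ) (Set.Ioi 0),
        ‖(z₀ - t • d) - b i‖ ^ 2 - ‖p - a i‖ ^ 2 < m := by
      intro i hi
      by_cases hiA : i ∈ A
      · have hc := hact i hiA
        have hevs : ∀ᶠ t in nhdsWithin (0:ℝ) (Set.Ioi 0),
            t ∈ Set.Ioi (0:ℝ) ∧ t < 2 * ⟪d, z₀ - b i⟫ / (‖d‖ ^ 2 + 1) := by
          refine eventually_mem_nhdsWithin.and ?_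
          refine Filter.Eventually.filter_mono nhdsWithin_le_nhds ?_
          exact eventually_lt_nhds (by positivity)
        refine hevs.mono fun t ⟨ht0, htlt⟩ => ?_
        rw [Set.mem_Ioi] at ht0
        have hiAeq : ‖z₀ - b i‖ ^ 2 - ‖p - a i‖ ^ 2 = m := (Finset.mem_filter.1 hiA).2
        have hexp : ‖(z₀ - t • d) - b i‖ ^ 2
            = ‖z₀ - b i‖ ^ 2 - 2 * t * ⟪d, z₀ - b i⟫ + t ^ 2 * ‖d‖ ^ 2 := by
          have : (z₀ - t • d) - b i = (z₀ - b i) - t • d := by abel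
          rw [this, norm_sub_sq_real, real_inner_smul_right, norm_smul,
            real_inner_comm]
          simp [abs_of_pos ht0]
          ring
        have hb : t * ‖d‖ ^ 2 < 2 * ⟪d, z₀ - b i⟫ := by
          have : t * (‖d‖ ^ 2 + 1) < 2 * ⟪d, z₀ - b i⟫ := by
            rw [← lt_div_iff₀ (by positivity)]
            exact htlt
          nlinarith
        nlinarith
      · have h1 : ‖z₀ - b i‖ ^ 2 - ‖p - a i‖ ^ 2 ≤ m := by
          simp only [hm, hφ]
          exact Finset.le_sup' (fun i => ‖z₀ - b i‖ ^ 2 - ‖p - a i‖ ^ 2) hi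
        have h2 : ‖z₀ - b i‖ ^ 2 - ‖p - a i‖ ^ 2 ≠ m := fun h =>
          hiA (Finset.mem_filter.2 ⟨hi, h⟩)
        have h3 : ‖z₀ - b i‖ ^ 2 - ‖p - a i‖ ^ 2 < m := lt_of_le_of_ne h1 h2
        have hcont : ContinuousAt (fun t : ℝ => ‖(z₀ - t • d) - b i‖ ^ 2 - ‖p - a i‖ ^ 2) 0 := by
          have : Continuous fun t : ℝ => ‖(z₀ - t • d) - b i‖ :=
            ((continuous_const.sub (continuous_id.smul continuous_const)).sub continuous_const).norm
          fun_prop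
        have := hcont.eventually_lt continuousAt_const (by simpa using h3)
        exact Filter.Eventually.filter_mono nhdsWithin_le_nhds this
    have hall : ∀ᶠ t in nhdsWithin (0:ℝ) (Set.Ioi 0),
        ∀ i ∈ s, ‖(z₀ - t • d) - b i‖ ^ 2 - ‖p - a i‖ ^ 2 < m := by
      rw [Filter.eventually_all_finset]; exact hev
    obtain ⟨t, ht⟩ := hall.exists
    have : φ (z₀ - t • d) < m := by
      rw [hφ, Finset.sup'_lt_iff]
      exact ht
    exact absurd (hmin (z₀ - t • d)) (not_le.2 this)
  -- convex combination representation
  rw [Finset.convexHull_eq] at hzF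
  obtain ⟨w, hw0, hw1, hwz⟩ := hzF
  rw [Finset.centerMass_eq_of_sum_1 _ _ hw1] at hwz
  -- a section of b over the active points
  have hsec : ∀ y : E, y ∈ F → ∃ i, i ∈ A ∧ b i = y := by
    intro y hy
    obtain ⟨i, hi, hbi⟩ := Finset.mem_image.1 hy
    exact ⟨i, hi, hbi⟩
  set g : E → ι := fun y => if h : ∃ i, i ∈ A ∧ b i = y then h.choose else i₀ with hg
  have hgA : ∀ y ∈ F, g y ∈ A := by
    intro y hy
    rw [hg]
    simp only [dif_pos (hsec y hy)]
    exact (hsec y hy).choose_spec.1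
  have hgb : ∀ y ∈ F, b (g y) = y := by
    intro y hy
    rw [hg]
    simp only [dif_pos (hsec y hy)]
    exact (hsec y hy).choose_spec.2
  set c : E → E := fun y => p - a (g y) with hc
  have hact2 : ∀ y ∈ F, ‖z₀ - y‖ ^ 2 = ‖c y‖ ^ 2 + m := by
    intro y hy
    have h1 := (Finset.mem_filter.1 (hgA y hy)).2
    rw [hgb y hy] at h1
    simp only [hc]
    linarith
  have hpair : ∀ y ∈ F, ∀ y' ∈ F, ⟪c y, c y'⟫ + m ≤ ⟪z₀ - y, z₀ - y'⟫ := by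
    intro y hy y' hy'
    refine kirsz_inner_ineq (hact2 y hy) (hact2 y' hy') ?_
    have h1 : (z₀ - y) - (z₀ - y') = y' - y := by abel
    have h2 : c y - c y' = a (g y') - a (g y) := by simp only [hc]; abel
    rw [h1, h2]
    calc ‖y' - y‖ = ‖b (g y') - b (g y)‖ := by rw [hgb y hy, hgb y' hy']
      _ ≤ ‖a (g y') - a (g y)‖ :=
          hlip (g y') (hAs (hgA y' hy')) (g y) (hAs (hgA y hy))
  have hsum0 : (∑ y ∈ F, w y • (z₀ - y)) = 0 := by
    simp only [smul_sub]
    rw [Finset.sum_sub_distrib, ← Finset.sum_smul, hw1, one_smul]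
    simp only [id] at hwz
    rw [hwz, sub_self]
  have hfinal := kirsz_sum_ineq F w (fun y => z₀ - y) c m hw0 hw1 hpair
  rw [hsum0, norm_zero] at hfinal
  nlinarith [norm_nonneg (∑ y ∈ F, w y • c y)]

/-- One-point Kirszbraun over an arbitrary family of pairs. -/
lemma kirsz_all {ι : Type*} [Nonempty ι] (a b : ι → E)
    (hlip : ∀ i j, ‖b i - b j‖ ≤ ‖a i - a j‖) (p : E) :
    ∃ z : E, ∀ i, ‖z - b i‖ ≤ ‖p - a i‖ := by
  classical
  obtain ⟨i₀⟩ := ‹Nonempty ι›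
  set K : ι → Set E := fun i => closedBall (b i) ‖p - a i‖ with hK
  by_contra h
  push_neg at h
  have hempty : (K i₀ ∩ ⋂ i, K i) = ∅ := by
    ext z
    simp only [Set.mem_inter_iff, Set.mem_iInter, hK, mem_closedBall, dist_eq_norm,
      Set.mem_empty_iff_false, iff_false, not_and, not_forall]
    intro _
    obtain ⟨i, hi⟩ := h z
    exact ⟨i, not_le.2 hi⟩
  obtain ⟨t, ht⟩ := (isCompact_closedBall (b i₀) ‖p - a i₀‖).elim_finite_subfamily_closed
    K (fun i => Metric.isClosed_closedBall) hempty
  obtain ⟨z, hz⟩ := kirsz_finite (insert i₀ t) (Finset.insert_nonempty _ _) a b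
    (fun i _ j _ => hlip i j) p
  have hzmem : z ∈ K i₀ ∩ ⋂ i ∈ t, K i := by
    constructor
    · rw [hK]
      simp only [mem_closedBall, dist_eq_norm]
      exact hz i₀ (Finset.mem_insert_self _ _)
    · refine Set.mem_iInter₂.2 fun i hi => ?_
      rw [hK]
      simp only [mem_closedBall, dist_eq_norm]
      exact hz i (Finset.mem_insert_of_mem hi)
  rw [ht] at hzmem
  exact hzmem

/-- Core resolvent theorem in a finite-dimensional real inner product space. -/
theorem core_resolvent (S : ℝ) (hS : 0 < S) (G : E → Set E)
    (hmono : ∀ ω ω' u u', u ∈ G ω → u' ∈ G ω' → (0:ℝ) ≤ ⟪u - u', ω - ω'⟫)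
    (hmax : ∀ ω u, (∀ ω' u', u' ∈ G ω' → (0:ℝ) ≤ ⟪u - u', ω - ω'⟫) → u ∈ G ω)
    (hinv : ∀ ω ω' u u', u ∈ G ω → u' ∈ G ω' → (1/S) * ‖ω - ω'‖ ≤ ‖u - u'‖) :
    ∃ J : E → E, (∀ ω v, ω - v ∈ G v ↔ v = J ω) ∧
      (∀ ω ω', ‖J ω - J ω'‖ ≤ (S / Real.sqrt (S ^ 2 + 1)) * ‖ω - ω'‖) := by
  classical
  have hsurj : ∀ p : E, ∃ v, p - v ∈ G v := by
    intro p
    have hne : ∃ x : E × E, x.2 ∈ G x.1 := by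
      by_cases h : ∃ ω u, u ∈ G ω
      · obtain ⟨ω, u, hu⟩ := h; exact ⟨(ω, u), hu⟩
      · push_neg at h
        exact ⟨((0:E), (0:E)), hmax 0 0 fun ω' u' hu' => absurd hu' (h ω' u')⟩
    have hneι : Nonempty {x : E × E // x.2 ∈ G x.1} := ⟨⟨hne.choose, hne.choose_spec⟩⟩
    set a : {x : E × E // x.2 ∈ G x.1} → E := fun i => i.1.1 + i.1.2 with ha
    set b : {x : E × E // x.2 ∈ G x.1} → E := fun i => i.1.1 - i.1.2 with hb
    have hlip : ∀ i j, ‖b i - b j‖ ≤ ‖a i - a j‖ := by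
      intro i j
      have hm := hmono i.1.1 j.1.1 i.1.2 j.1.2 i.2 j.2
      have h1 : ‖b i - b j‖ ^ 2 ≤ ‖a i - a j‖ ^ 2 := by
        have e1 : a i - a j = (i.1.1 - j.1.1) + (i.1.2 - j.1.2) := by
          simp only [ha]; abel
        have e2 : b i - b j = (i.1.1 - j.1.1) - (i.1.2 - j.1.2) := by
          simp only [hb]; abel
        rw [e1, e2, norm_add_sq_real, norm_sub_sq_real]
        have hcomm := real_inner_comm (i.1.1 - j.1.1) (i.1.2 - j.1.2)
        linarith
      have h2 := Real.sqrt_le_sqrt h1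
      rwa [Real.sqrt_sq (norm_nonneg _), Real.sqrt_sq (norm_nonneg _)] at h2
    obtain ⟨z, hz⟩ := kirsz_all a b hlip p
    refine ⟨(2⁻¹ : ℝ) • (p + z), hmax _ _ fun ω' u' hu' => ?_⟩
    have key := hz ⟨(ω', u'), hu'⟩
    simp only [ha, hb] at key
    have e1 : (p - (2⁻¹ : ℝ) • (p + z)) - u'
        = (2⁻¹ : ℝ) • ((p - (ω' + u')) - (z - (ω' - u'))) := by module
    have e2 : (2⁻¹ : ℝ) • (p + z) - ω'
        = (2⁻¹ : ℝ) • ((p - (ω' + u')) + (z - (ω' - u'))) := by module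
    rw [e1, e2, real_inner_smul_left, real_inner_smul_right]
    set X := p - (ω' + u')
    set Y := z - (ω' - u')
    have hXY : ⟪X - Y, X + Y⟫ = ‖X‖ ^ 2 - ‖Y‖ ^ 2 := by
      rw [inner_sub_left, inner_add_right, inner_add_right,
        real_inner_self_eq_norm_sq, real_inner_self_eq_norm_sq,
        real_inner_comm X Y]
      ring
    rw [hXY]
    have hX0 := norm_nonneg X
    have hY0 := norm_nonneg Y
    nlinarith [key]
  have huniq : ∀ ω v v', ω - v ∈ G v → ω - v' ∈ G v' → v = v' := by
    intro ω v v' h1 h2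
    have hm := hmono v v' (ω - v) (ω - v') h1 h2
    have e : (ω - v) - (ω - v') = -(v - v') := by abel
    rw [e, inner_neg_left, real_inner_self_eq_norm_sq] at hm
    have : ‖v - v'‖ ^ 2 ≤ 0 := by linarith
    have h0 : ‖v - v'‖ = 0 := by nlinarith [norm_nonneg (v - v'), sq_nonneg ‖v - v'‖]
    rwa [norm_sub_eq_zero_iff] at h0
  set J : E → E := fun ω => (hsurj ω).choose with hJ
  have hJspec : ∀ ω, ω - J ω ∈ G (J ω) := fun ω => (hsurj ω).choose_spec
  have hiff : ∀ ω v, ω - v ∈ G v ↔ v = J ω := by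
    intro ω v
    constructor
    · intro h
      exact huniq ω v (J ω) h (hJspec ω)
    · rintro rfl
      exact hJspec ω
  refine ⟨J, hiff, fun ω ω' => ?_⟩
  have h1 : ω - J ω ∈ G (J ω) := hJspec ω
  have h2 : ω' - J ω' ∈ G (J ω') := hJspec ω'
  have hm := hmono (J ω) (J ω') (ω - J ω) (ω' - J ω') h1 h2
  have hU := hinv (J ω) (J ω') (ω - J ω) (ω' - J ω') h1 h2
  set A := ‖J ω - J ω'‖ with hA
  set B := ‖ω - ω'‖ with hB
  set U := ‖(ω - J ω) - (ω' - J ω')‖ with hU2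
  have hA0 : 0 ≤ A := norm_nonneg _
  have hB0 : 0 ≤ B := norm_nonneg _
  have hU0 : 0 ≤ U := norm_nonneg _
  have hBsq : B ^ 2 = A ^ 2 + 2 * ⟪(ω - J ω) - (ω' - J ω'), J ω - J ω'⟫ + U ^ 2 := by
    have e : ω - ω' = (J ω - J ω') + ((ω - J ω) - (ω' - J ω')) := by abel
    rw [hB, e, norm_add_sq_real, real_inner_comm, hA, hU2]
  have hUA : (1 / S) * A ≤ U := hU
  have hsq : (S ^ 2 + 1) * A ^ 2 ≤ S ^ 2 * B ^ 2 := by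
    have hprod : (1 / S * A) * (1 / S * A) ≤ U * U :=
      mul_le_mul hUA hUA (by positivity) hU0
    have hS2 : 0 < S ^ 2 := by positivity
    have hSS : S ^ 2 * ((1 / S) * (1 / S)) = 1 := by
      rw [pow_two]; field_simp
    nlinarith [mul_le_mul_of_nonneg_left hprod hS2.le, hm, sq_nonneg A]
  have hsqrtpos : 0 < Real.sqrt (S ^ 2 + 1) := Real.sqrt_pos.2 (by positivity)
  rw [div_mul_eq_mul_div, le_div_iff₀ hsqrtpos]
  have hfin : (A * Real.sqrt (S ^ 2 + 1)) ^ 2 ≤ (S * B) ^ 2 := by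
    rw [mul_pow, Real.sq_sqrt (by positivity : (0:ℝ) ≤ S ^ 2 + 1)]
    nlinarith
  have := Real.sqrt_le_sqrt hfin
  rwa [Real.sqrt_sq (by positivity), Real.sqrt_sq (by positivity)] at this

end Aux

open scoped MatrixOrder in
open RealInnerProductSpace in
/-- If `G = Φ⁻¹F` is maximally monotone in `⟨·,·⟩_Φ` and `(1/S)`-inverse Lipschitz in
`‖·‖_Φ`, then its resolvent `(Id + G)⁻¹` is a contraction in `‖·‖_Φ` with rate
`S/√(S²+1) < 1`. -/
theorem resolvent_contraction_weighted
    (q : ℕ) (S : ℝ) (hS : 0 < S)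
    (Φ : Matrix (Fin q) (Fin q) ℝ) (hΦ : Φ.PosDef)
    (G : Evec q → Set (Evec q))
    (hmono : ∀ ω ω' u u', u ∈ G ω → u' ∈ G ω' → (0 : ℝ) ≤ wip Φ (u - u') (ω - ω'))
    (hmax : ∀ ω u, (∀ ω' u', u' ∈ G ω' → (0 : ℝ) ≤ wip Φ (u - u') (ω - ω')) → u ∈ G ω)
    (hinv : ∀ ω ω' u u', u ∈ G ω → u' ∈ G ω' →
      (1 / S) * wnorm Φ (ω - ω') ≤ wnorm Φ (u - u')) :
    ∃ J : Evec q → Evec q,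
      (∀ ω v, ω - v ∈ G v ↔ v = J ω) ∧
      (∀ ω ω', wnorm Φ (J ω - J ω') ≤ (S / Real.sqrt (S ^ 2 + 1)) * wnorm Φ (ω - ω')) ∧
      S / Real.sqrt (S ^ 2 + 1) < 1 := by
  classical
  have hrate : S / Real.sqrt (S ^ 2 + 1) < 1 := by
    have h1 : S < Real.sqrt (S ^ 2 + 1) := by
      have h2 := Real.sqrt_lt_sqrt (sq_nonneg S) (lt_add_one (S ^ 2))
      rwa [Real.sqrt_sq hS.le] at h2
    rw [div_lt_one (lt_of_le_of_lt hS.le h1)]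
    exact h1
  -- the square root of Φ
  set Ψ : Matrix (Fin q) (Fin q) ℝ := CFC.sqrt Φ with hΨ
  have hΨps : Ψ.PosSemidef := nonneg_iff_posSemidef.mp (CFC.sqrt_nonneg Φ)
  have hΨmul : Ψ * Ψ = Φ := CFC.sqrt_mul_sqrt_self Φ hΦ.posSemidef.nonneg
  set L : Evec q →ₗ[ℝ] Evec q := Matrix.toEuclideanLin Ψ with hL
  have hLsym : ∀ x y : Evec q, ⟪L x, y⟫ = ⟪x, L y⟫ :=
    fun x y => Matrix.isHermitian_iff_isSymmetric.1 hΨps.1 x y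
  have hLL : ∀ x, L (L x) = Matrix.toEuclideanLin Φ x := by
    intro x
    rw [hL, ← hΨmul]
    simp only [Matrix.toEuclideanLin_apply]
    simp [Matrix.mulVec_mulVec]
  have hwip : ∀ x y, wip Φ x y = ⟪L x, L y⟫ := by
    intro x y
    rw [wip, ← hLL, hLsym]
  have hwnorm : ∀ x, wnorm Φ x = ‖L x‖ := by
    intro x
    rw [wnorm, hwip, real_inner_self_eq_norm_sq, Real.sqrt_sq (norm_nonneg _)]
  have hLinj : Function.Injective L := by
    intro x y hxy
    by_contra hne
    have hx0 : x - y ≠ 0 := sub_ne_zero.2 hne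
    have hpos : 0 < wip Φ (x - y) (x - y) := by
      have h1 := hΦ.re_dotProduct_pos (x := WithLp.equiv 2 (Fin q → ℝ) (x - y))
        (by intro h; apply hx0; simpa using congrArg (WithLp.toLp 2) h)
      rw [wip]
      rw [show (inner ℝ (Matrix.toEuclideanLin Φ (x - y)) (x - y) : ℝ)
        = dotProduct (star (WithLp.equiv 2 (Fin q → ℝ)
            (Matrix.toEuclideanLin Φ (x - y)))) (WithLp.equiv 2 (Fin q → ℝ) (x - y)) from
          (EuclideanSpace.inner_eq_star_dotProduct _ _).trans (dotProduct_comm _ _)]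
      simp only [WithLp.equiv_apply, Matrix.ofLp_toEuclideanLin_apply]
      simpa [dotProduct_comm] using h1
    have : wip Φ (x - y) (x - y) = 0 := by
      rw [hwip, map_sub, hxy, sub_self]
      simp
    linarith
  have hLsurj : Function.Surjective L :=
    (LinearMap.injective_iff_surjective).1 hLinj
  set Leq : Evec q ≃ₗ[ℝ] Evec q := LinearEquiv.ofBijective L ⟨hLinj, hLsurj⟩ with hLeq
  have hLeqL : ∀ x, Leq x = L x := fun x => rfl
  have hsymmL : ∀ x, Leq.symm (L x) = x := fun x => Leq.symm_apply_apply x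
  have happly : ∀ x, L (Leq.symm x) = x := fun x => Leq.apply_symm_apply x
  set G₂ : Evec q → Set (Evec q) := fun x => L '' (G (Leq.symm x)) with hG₂
  have hmem : ∀ ω u, u ∈ G ω ↔ L u ∈ G₂ (L ω) := by
    intro ω u
    constructor
    · intro h
      exact ⟨u, by rwa [hsymmL], rfl⟩
    · rintro ⟨w, hw, hwu⟩
      rw [hsymmL] at hw
      rwa [← hLinj hwu]
  have hmono₂ : ∀ x x' y y', y ∈ G₂ x → y' ∈ G₂ x' → (0:ℝ) ≤ ⟪y - y', x - x'⟫ := by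
    rintro x x' y y' ⟨u, hu, rfl⟩ ⟨u', hu', rfl⟩
    have h := hmono _ _ _ _ hu hu'
    rw [hwip] at h
    rw [← happly x, ← happly x', ← map_sub, ← map_sub]
    exact h
  have hmax₂ : ∀ x y, (∀ x' y', y' ∈ G₂ x' → (0:ℝ) ≤ ⟪y - y', x - x'⟫) → y ∈ G₂ x := by
    intro x y h
    have hy : Leq.symm y ∈ G (Leq.symm x) := by
      refine hmax _ _ fun ω' u' hu' => ?_
      have h2 := h (L ω') (L u') ((hmem ω' u').1 hu')
      rw [hwip, map_sub, map_sub, happly, happly]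
      exact h2
    have := (hmem _ _).1 hy
    rwa [happly, happly] at this
  have hinv₂ : ∀ x x' y y', y ∈ G₂ x → y' ∈ G₂ x' →
      (1 / S) * ‖x - x'‖ ≤ ‖y - y'‖ := by
    rintro x x' y y' ⟨u, hu, rfl⟩ ⟨u', hu', rfl⟩
    have h := hinv _ _ _ _ hu hu'
    rw [hwnorm, hwnorm, map_sub, map_sub, happly, happly] at h
    exact h
  obtain ⟨J₂, hiff₂, hcontr₂⟩ := core_resolvent S hS G₂ hmono₂ hmax₂ hinv₂
  refine ⟨fun ω => Leq.symm (J₂ (L ω)), ?_, ?_, hrate⟩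
  · intro ω v
    rw [hmem, map_sub]
    rw [hiff₂ (L ω) (L v)]
    constructor
    · intro h
      rw [← hsymmL v, h]
    · intro h
      rw [h, happly]
  · intro ω ω'
    have h := hcontr₂ (L ω) (L ω')
    rw [hwnorm, hwnorm, map_sub, map_sub, happly, happly]
    exact h
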